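/- Under the stated assumptions, the variance of Z, defined as Var(Z) = E[|Z|²] − |E[Z]|², equals (1 − |c_{ε_θ}(1)²·c_{ε_φ}(1)²|)·i₀² + σ_i². -/

import Mathlib

open MeasureTheory ProbabilityTheory Complex

lemma indepFun_integral_mul_complex {Ω : Type*} [MeasurableSpace Ω] {μ : Measure Ω}
    {X Y : Ω → ℂ} (h : IndepFun X Y μ) (hX : Integrable X μ) (hY : Integrable Y μ) :
    ∫ ω, X ω * Y ω ∂μ = (∫ ω, X ω ∂μ) * ∫ ω, Y ω ∂μ := by
  have hXre : Integrable (fun ω => (X ω).re) μ := hX.re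
  have hXim : Integrable (fun ω => (X ω).im) μ := hX.im
  have hYre : Integrable (fun ω => (Y ω).re) μ := hY.re
  have hYim : Integrable (fun ω => (Y ω).im) μ := hY.im
  have hac : ∫ ω, (X ω).re * (Y ω).re ∂μ = (∫ ω, (X ω).re ∂μ) * ∫ ω, (Y ω).re ∂μ := by
    simpa [Function.comp_def, Pi.mul_def] using
      (h.comp Complex.measurable_re Complex.measurable_re).integral_mul_eq_mul_integral hXre.aestronglyMeasurable hYre.aestronglyMeasurable
  have hbd : ∫ ω, (X ω).im * (Y ω).im ∂μ = (∫ ω, (X ω).im ∂μ) * ∫ ω, (Y ω).im ∂μ := by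
    simpa [Function.comp_def, Pi.mul_def] using
      (h.comp Complex.measurable_im Complex.measurable_im).integral_mul_eq_mul_integral hXim.aestronglyMeasurable hYim.aestronglyMeasurable
  have had : ∫ ω, (X ω).re * (Y ω).im ∂μ = (∫ ω, (X ω).re ∂μ) * ∫ ω, (Y ω).im ∂μ := by
    simpa [Function.comp_def, Pi.mul_def] using
      (h.comp Complex.measurable_re Complex.measurable_im).integral_mul_eq_mul_integral hXre.aestronglyMeasurable hYim.aestronglyMeasurable
  have hbc : ∫ ω, (X ω).im * (Y ω).re ∂μ = (∫ ω, (X ω).im ∂μ) * ∫ ω, (Y ω).re ∂μ := by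
    simpa [Function.comp_def, Pi.mul_def] using
      (h.comp Complex.measurable_im Complex.measurable_re).integral_mul_eq_mul_integral hXim.aestronglyMeasurable hYre.aestronglyMeasurable
  have iac : Integrable (fun ω => (X ω).re * (Y ω).re) μ := by
    simpa [Function.comp_def, Pi.mul_def] using
      (h.comp Complex.measurable_re Complex.measurable_re).integrable_mul hXre hYre
  have ibd : Integrable (fun ω => (X ω).im * (Y ω).im) μ := by
    simpa [Function.comp_def, Pi.mul_def] using
      (h.comp Complex.measurable_im Complex.measurable_im).integrable_mul hXim hYim
  have iad : Integrable (fun ω => (X ω).re * (Y ω).im) μ := by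
    simpa [Function.comp_def, Pi.mul_def] using
      (h.comp Complex.measurable_re Complex.measurable_im).integrable_mul hXre hYim
  have ibc : Integrable (fun ω => (X ω).im * (Y ω).re) μ := by
    simpa [Function.comp_def, Pi.mul_def] using
      (h.comp Complex.measurable_im Complex.measurable_re).integrable_mul hXim hYre
  have key : ∀ (f g : Ω → ℝ), Integrable f μ → Integrable g μ →
      ∫ ω, ((f ω : ℂ) + (g ω : ℂ) * Complex.I) ∂μ
        = ((∫ ω, f ω ∂μ : ℝ) : ℂ) + ((∫ ω, g ω ∂μ : ℝ) : ℂ) * Complex.I := by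
    intro f g hf hg
    have h1 : Integrable (fun ω => ((f ω : ℝ) : ℂ)) μ := hf.ofReal
    have h2 : Integrable (fun ω => ((g ω : ℝ) : ℂ) * Complex.I) μ := hg.ofReal.mul_const _
    rw [integral_add h1 h2, integral_mul_const]
    congr 1
    · exact integral_ofReal
    · congr 1
      exact integral_ofReal
  have hXd : ∫ ω, X ω ∂μ = ((∫ ω, (X ω).re ∂μ : ℝ) : ℂ) + ((∫ ω, (X ω).im ∂μ : ℝ) : ℂ) * Complex.I := by
    rw [← key _ _ hXre hXim]
    congr 1; ext ω; simp [Complex.re_add_im]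
  have hYd : ∫ ω, Y ω ∂μ = ((∫ ω, (Y ω).re ∂μ : ℝ) : ℂ) + ((∫ ω, (Y ω).im ∂μ : ℝ) : ℂ) * Complex.I := by
    rw [← key _ _ hYre hYim]
    congr 1; ext ω; simp [Complex.re_add_im]
  have hXYd : ∫ ω, X ω * Y ω ∂μ
      = ((∫ ω, ((X ω).re * (Y ω).re - (X ω).im * (Y ω).im) ∂μ : ℝ) : ℂ)
        + ((∫ ω, ((X ω).re * (Y ω).im + (X ω).im * (Y ω).re) ∂μ : ℝ) : ℂ) * Complex.I := by
    have isub : Integrable (fun ω => (X ω).re * (Y ω).re - (X ω).im * (Y ω).im) μ := iac.sub ibd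
    have iadd : Integrable (fun ω => (X ω).re * (Y ω).im + (X ω).im * (Y ω).re) μ := iad.add ibc
    rw [← key _ _ isub iadd]
    congr 1; ext ω
    simp only [Complex.ofReal_sub, Complex.ofReal_add, Complex.ofReal_mul]
    rw [Complex.ext_iff]
    constructor <;> simp [Complex.mul_re, Complex.mul_im] <;> ring
  rw [hXd, hYd, hXYd, integral_sub iac ibd, integral_add iad ibc, hac, hbd, had, hbc]
  push_cast
  ring_nf
  rw [Complex.I_sq]
  ring



/-- Variance of the EM current phasor:
`Var(Z) = E[|Z|²] − |E[Z]|² = (1 − |c_{ε_θ}(1)²·c_{ε_φ}(1)²|)·i₀² + σ_i²` for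
`Z = (i₀ + ε_i)·exp(i(θ + φ + ε_θ + ε_φ))` with `ε_i, ε_θ, ε_φ` mutually independent,
`E[ε_i] = 0`, `E[ε_i²] = σ_i² < ∞`, `E[ε_θ] = 0`, `E[ε_φ] = 0`. -/
theorem variance_of_noisy_current_phasor
    {Ω : Type*} [MeasurableSpace Ω] (μ : Measure Ω) [IsProbabilityMeasure μ]
    (i₀ θ φ σi : ℝ) (εi εθ εφ : Ω → ℝ)
    (hmi : Measurable εi) (hmθ : Measurable εθ) (hmφ : Measurable εφ)
    (hindep : iIndepFun (m := fun _ : Fin 3 => (inferInstance : MeasurableSpace ℝ))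
      ![εi, εθ, εφ] μ)
    (hii : Integrable εi μ)
    (hii2 : Integrable (fun ω => (εi ω) ^ 2) μ)
    (hEi : ∫ ω, εi ω ∂μ = 0)
    (hEi2 : ∫ ω, (εi ω) ^ 2 ∂μ = σi ^ 2)
    (hiθ : Integrable εθ μ) (hEθ : ∫ ω, εθ ω ∂μ = 0)
    (hiφ : Integrable εφ μ) (hEφ : ∫ ω, εφ ω ∂μ = 0) :
    (∫ ω, ‖(((i₀ + εi ω : ℝ) : ℂ)
          * Complex.exp (Complex.I * ((θ + φ + εθ ω + εφ ω : ℝ) : ℂ)))‖ ^ 2 ∂μ)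
      - ‖(∫ ω, ((i₀ + εi ω : ℝ) : ℂ)
          * Complex.exp (Complex.I * ((θ + φ + εθ ω + εφ ω : ℝ) : ℂ)) ∂μ)‖ ^ 2
      = (1 - ‖
            ((∫ ω, Complex.exp (Complex.I * ((1 : ℝ) : ℂ) * ((εθ ω : ℝ) : ℂ)) ∂μ) ^ 2
              * (∫ ω, Complex.exp (Complex.I * ((1 : ℝ) : ℂ) * ((εφ ω : ℝ) : ℂ)) ∂μ) ^ 2)‖)
          * i₀ ^ 2 + σi ^ 2 := by
  have hexp_abs : ∀ x : ℝ, ‖(Complex.exp (Complex.I * (x : ℂ)))‖ = 1 := by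
    intro x; simp [Complex.norm_exp]
  -- Part 1 : the second moment
  have hL1 : (∫ ω, ‖(((i₀ + εi ω : ℝ) : ℂ)
        * Complex.exp (Complex.I * ((θ + φ + εθ ω + εφ ω : ℝ) : ℂ)))‖ ^ 2 ∂μ)
      = i₀ ^ 2 + σi ^ 2 := by
    have h1 : ∀ ω, ‖(((i₀ + εi ω : ℝ) : ℂ)
        * Complex.exp (Complex.I * ((θ + φ + εθ ω + εφ ω : ℝ) : ℂ)))‖ ^ 2
        = i₀ ^ 2 + 2 * i₀ * εi ω + εi ω ^ 2 := by
      intro ω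
      rw [norm_mul, hexp_abs, mul_one, Complex.norm_real, Real.norm_eq_abs, _root_.sq_abs]
      ring
    simp_rw [h1]
    have ia : Integrable (fun ω => i₀ ^ 2 + 2 * i₀ * εi ω) μ :=
      (integrable_const _).add (hii.const_mul _)
    rw [integral_add ia hii2, integral_add (integrable_const _) (hii.const_mul _),
      integral_const, integral_const_mul, hEi, hEi2]
    simp
  -- the three factors
  set F0 : Ω → ℂ := fun ω => (i₀ : ℂ) + (εi ω : ℂ) with hF0def
  set F1 : Ω → ℂ := fun ω => Complex.exp (Complex.I * (εθ ω : ℂ)) with hF1def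
  set F2 : Ω → ℂ := fun ω => Complex.exp (Complex.I * (εφ ω : ℂ)) with hF2def
  set C : ℂ := Complex.exp (Complex.I * ((θ : ℂ) + (φ : ℂ))) with hCdef
  have hZ : ∀ ω, ((i₀ + εi ω : ℝ) : ℂ)
      * Complex.exp (Complex.I * ((θ + φ + εθ ω + εφ ω : ℝ) : ℂ))
      = C * (F0 ω * F1 ω * F2 ω) := by
    intro ω
    have h2 : Complex.I * ((θ + φ + εθ ω + εφ ω : ℝ) : ℂ)
        = Complex.I * ((θ : ℂ) + (φ : ℂ)) + Complex.I * (εθ ω : ℂ)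
          + Complex.I * (εφ ω : ℂ) := by push_cast; ring
    rw [h2, Complex.exp_add, Complex.exp_add]
    push_cast
    ring
  -- measurability and integrability
  have hg1m : Measurable (fun x : ℝ => Complex.exp (Complex.I * (x : ℂ))) :=
    Complex.continuous_exp.measurable.comp (Complex.measurable_ofReal.const_mul _)
  have hg0m : Measurable (fun x : ℝ => (i₀ : ℂ) + (x : ℂ)) :=
    Complex.measurable_ofReal.const_add _
  have iF0 : Integrable F0 μ := by
    have : Integrable (fun ω => ((εi ω : ℝ) : ℂ)) μ := hii.ofReal
    exact (integrable_const _).add this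
  have iexp : ∀ (e : Ω → ℝ), Measurable e →
      Integrable (fun ω => Complex.exp (Complex.I * (e ω : ℂ))) μ := by
    intro e hme
    refine (integrable_const (1 : ℝ)).mono' (hg1m.comp hme).aestronglyMeasurable ?_
    filter_upwards with ω
    simp [hexp_abs]
  have iF1 : Integrable F1 μ := iexp εθ hmθ
  have iF2 : Integrable F2 μ := iexp εφ hmφ
  -- independence
  have h01 : IndepFun εi εθ μ := hindep.indepFun (show (0 : Fin 3) ≠ 1 by decide)
  have hF01 : IndepFun F0 F1 μ := h01.comp hg0m hg1m
  have hmeas3 : ∀ i, Measurable (![εi, εθ, εφ] i) := by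
    intro i; fin_cases i <;> assumption
  have hpair : IndepFun (fun ω => (εi ω, εθ ω)) εφ μ :=
    hindep.indepFun_prodMk hmeas3 0 1 2 (by decide) (by decide)
  have hF012 : IndepFun (fun ω => F0 ω * F1 ω) F2 μ := by
    have := hpair.comp
      (show Measurable (fun p : ℝ × ℝ => ((i₀ : ℂ) + (p.1 : ℂ))
          * Complex.exp (Complex.I * (p.2 : ℂ))) from
        (hg0m.comp measurable_fst).mul (hg1m.comp measurable_snd)) hg1m
    exact this
  have iF01 : Integrable (fun ω => F0 ω * F1 ω) μ := hF01.integrable_mul iF0 iF1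
  -- the mean
  have e0 : ∫ ω, F0 ω ∂μ = (i₀ : ℂ) := by
    have hoc : Integrable (fun ω => ((εi ω : ℝ) : ℂ)) μ := hii.ofReal
    have hor : ∫ ω, ((εi ω : ℝ) : ℂ) ∂μ = ((∫ ω, εi ω ∂μ : ℝ) : ℂ) := integral_ofReal
    rw [hF0def]
    rw [integral_add (integrable_const _) hoc, integral_const, hor, hEi]
    simp
  have hEZ : ∫ ω, ((i₀ + εi ω : ℝ) : ℂ)
      * Complex.exp (Complex.I * ((θ + φ + εθ ω + εφ ω : ℝ) : ℂ)) ∂μ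
      = C * ((i₀ : ℂ) * (∫ ω, F1 ω ∂μ) * ∫ ω, F2 ω ∂μ) := by
    simp_rw [hZ]
    rw [integral_const_mul, indepFun_integral_mul_complex hF012 iF01 iF2,
      indepFun_integral_mul_complex hF01 iF0 iF1, e0]
  have hCabs : ‖C‖ = 1 := by
    rw [hCdef]
    have : Complex.I * ((θ : ℂ) + (φ : ℂ)) = Complex.I * ((θ + φ : ℝ) : ℂ) := by push_cast; ring
    rw [this, hexp_abs]
  -- put everything together
  rw [hL1, hEZ]
  have hrhs1 : (∫ ω, Complex.exp (Complex.I * ((1 : ℝ) : ℂ) * ((εθ ω : ℝ) : ℂ)) ∂μ)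
      = ∫ ω, F1 ω ∂μ := by
    simp [hF1def]
  have hrhs2 : (∫ ω, Complex.exp (Complex.I * ((1 : ℝ) : ℂ) * ((εφ ω : ℝ) : ℂ)) ∂μ)
      = ∫ ω, F2 ω ∂μ := by
    simp [hF2def]
  rw [hrhs1, hrhs2]
  simp only [norm_mul, norm_pow, hCabs, Complex.norm_real, Real.norm_eq_abs, one_mul]
  rw [mul_pow, mul_pow, _root_.sq_abs]
  ring
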